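/- For every cardinal θ < κ, the cardinality of M is at least 2^θ. -/

import Mathlib

universe u

section Aux

variable {M : Type u} [LinearOrder M] [Nonempty M] {W : Type u}

open Classical in
/-- Pick a realization of the cut `(A, B)` if one exists. -/
noncomputable def stmt11Pick (A B : Set M) : M :=
  if h : ∃ m : M, (∀ a ∈ A, a < m) ∧ (∀ b ∈ B, m < b) then h.choose
  else Classical.arbitrary M

theorem stmt11Pick_spec {A B : Set M}
    (h : ∃ m : M, (∀ a ∈ A, a < m) ∧ (∀ b ∈ B, m < b)) :
    (∀ a ∈ A, a < stmt11Pick A B) ∧ (∀ b ∈ B, stmt11Pick A B < b) := by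
  rw [stmt11Pick]
  rw [dif_pos h]
  exact h.choose_spec

/-- The binary tree of points: the point at level `j` along the branch `s`. -/
noncomputable def stmt11Tree (r : W → W → Prop) (wf : WellFounded r) : W → Set W → M :=
  wf.fix (fun j IH s =>
    stmt11Pick {x | ∃ i, ∃ h : r i j, i ∈ s ∧ x = IH i h s}
               {x | ∃ i, ∃ h : r i j, i ∉ s ∧ x = IH i h s})

theorem stmt11Tree_eq (r : W → W → Prop) (wf : WellFounded r) (j : W) (s : Set W) :
    stmt11Tree (M := M) r wf j s =
      stmt11Pick {x | ∃ i, ∃ _ : r i j, i ∈ s ∧ x = stmt11Tree r wf i s}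
                 {x | ∃ i, ∃ _ : r i j, i ∉ s ∧ x = stmt11Tree r wf i s} := by
  rw [stmt11Tree, wf.fix_eq]

end Aux

/-- An instance of the fact behind Shelah 950, Claim a10: a nonempty `κ`-saturated linear
order (`κ` infinite) has cardinality at least `2^θ` for every cardinal `θ < κ`. -/
theorem stmt_11 {M : Type u} [LinearOrder M] [Nonempty M] (κ : Cardinal.{u})
    (hκ : Cardinal.aleph0 ≤ κ)
    (hsat : ∀ A B : Set M, Cardinal.mk ↥A < κ → Cardinal.mk ↥B < κ →
      (∀ a ∈ A, ∀ b ∈ B, a < b) →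
      ∃ m : M, (∀ a ∈ A, a < m) ∧ (∀ b ∈ B, m < b)) :
    ∀ θ : Cardinal.{u}, θ < κ → (2 : Cardinal.{u}) ^ θ ≤ Cardinal.mk M := by
  intro θ hθ
  classical
  set W : Type u := θ.out with hW
  have hWcard : Cardinal.mk W = θ := Cardinal.mk_out θ
  set r : W → W → Prop := WellOrderingRel with hr
  have wo : IsWellOrder W r := WellOrderingRel.isWellOrder
  have wf : WellFounded r := wo.wf
  set T : W → Set W → M := stmt11Tree r wf with hT
  -- any subset of a range over `W` has small cardinality
  have hsmall : ∀ (g : W → M) (A : Set M), A ⊆ Set.range g → Cardinal.mk ↥A < κ := by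
    intro g A hA
    calc Cardinal.mk ↥A ≤ Cardinal.mk ↥(Set.range g) := Cardinal.mk_le_mk_of_subset hA
      _ ≤ Cardinal.mk W := Cardinal.mk_range_le
      _ < κ := hWcard ▸ hθ
  -- the tree is correctly ordered
  have ordered : ∀ j : W, ∀ s : Set W, ∀ i : W, r i j →
      (i ∈ s → T i s < T j s) ∧ (i ∉ s → T j s < T i s) := by
    intro j
    refine wf.induction (C := fun j => ∀ s : Set W, ∀ i : W, r i j →
      (i ∈ s → T i s < T j s) ∧ (i ∉ s → T j s < T i s)) j ?_
    intro j IH s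
    have hex : ∃ m : M,
        (∀ a ∈ {x | ∃ i, ∃ _ : r i j, i ∈ s ∧ x = T i s}, a < m) ∧
        (∀ b ∈ {x | ∃ i, ∃ _ : r i j, i ∉ s ∧ x = T i s}, m < b) := by
      apply hsat
      · exact hsmall (fun i => T i s) _ (by rintro x ⟨i, hi, _, rfl⟩; exact ⟨i, rfl⟩)
      · exact hsmall (fun i => T i s) _ (by rintro x ⟨i, hi, _, rfl⟩; exact ⟨i, rfl⟩)
      · rintro a ⟨i, hi, his, rfl⟩ b ⟨i', hi', hi's, rfl⟩
        rcases (haveI := wo; trichotomous_of r i i') with h | h | h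
        · exact ((IH i' hi' s i h).1 his)
        · exact absurd (h ▸ his) hi's
        · exact ((IH i hi s i' h).2 hi's)
    have hspec := stmt11Pick_spec hex
    intro i hij
    constructor
    · intro his
      have := hspec.1 (T i s) ⟨i, hij, his, rfl⟩
      rwa [← stmt11Tree_eq r wf j s] at this
    · intro his
      have := hspec.2 (T i s) ⟨i, hij, his, rfl⟩
      rwa [← stmt11Tree_eq r wf j s] at this
  -- the tree point at level `j` depends only on the branch below `j`
  have agree : ∀ j : W, ∀ s t : Set W, (∀ i : W, r i j → (i ∈ s ↔ i ∈ t)) →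
      T j s = T j t := by
    intro j
    refine wf.induction (C := fun j => ∀ s t : Set W,
      (∀ i : W, r i j → (i ∈ s ↔ i ∈ t)) → T j s = T j t) j ?_
    intro j IH s t hst
    have hAB : ∀ i : W, r i j → T i s = T i t := by
      intro i hi
      exact IH i hi s t (fun i' hi' => hst i' (haveI := wo; trans_of r hi' hi))
    rw [hT, stmt11Tree_eq r wf j s, stmt11Tree_eq r wf j t, ← hT]
    congr 1
    · ext x
      constructor
      · rintro ⟨i, hi, his, rfl⟩
        exact ⟨i, hi, (hst i hi).1 his, hAB i hi⟩
      · rintro ⟨i, hi, his, rfl⟩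
        exact ⟨i, hi, (hst i hi).2 his, (hAB i hi).symm⟩
    · ext x
      constructor
      · rintro ⟨i, hi, his, rfl⟩
        exact ⟨i, hi, fun h => his ((hst i hi).2 h), hAB i hi⟩
      · rintro ⟨i, hi, his, rfl⟩
        exact ⟨i, hi, fun h => his ((hst i hi).1 h), (hAB i hi).symm⟩
  -- the branch realization map
  set F : Set W → M := fun s =>
    stmt11Pick {x | ∃ i, i ∈ s ∧ x = T i s} {x | ∃ i, i ∉ s ∧ x = T i s} with hF
  have Fspec : ∀ s : Set W,
      (∀ i ∈ s, T i s < F s) ∧ (∀ i ∉ s, F s < T i s) := by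
    intro s
    have hex : ∃ m : M,
        (∀ a ∈ {x | ∃ i, i ∈ s ∧ x = T i s}, a < m) ∧
        (∀ b ∈ {x | ∃ i, i ∉ s ∧ x = T i s}, m < b) := by
      apply hsat
      · exact hsmall (fun i => T i s) _ (by rintro x ⟨i, _, rfl⟩; exact ⟨i, rfl⟩)
      · exact hsmall (fun i => T i s) _ (by rintro x ⟨i, _, rfl⟩; exact ⟨i, rfl⟩)
      · rintro a ⟨i, his, rfl⟩ b ⟨i', hi's, rfl⟩
        rcases (haveI := wo; trichotomous_of r i i') with h | h | h
        · exact (ordered i' s i h).1 his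
        · exact absurd (h ▸ his) hi's
        · exact (ordered i s i' h).2 hi's
    have hspec := stmt11Pick_spec hex
    exact ⟨fun i his => hspec.1 (T i s) ⟨i, his, rfl⟩,
           fun i his => hspec.2 (T i s) ⟨i, his, rfl⟩⟩
  -- F is injective
  have Finj : Function.Injective F := by
    intro s t hFeq
    by_contra hne
    have hne' : {i : W | ¬ (i ∈ s ↔ i ∈ t)}.Nonempty := by
      rw [Set.nonempty_iff_ne_empty]
      intro h
      apply hne
      ext i
      by_contra hi
      have hmem : i ∈ {i : W | ¬ (i ∈ s ↔ i ∈ t)} := hi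
      rw [h] at hmem
      exact hmem
    set i0 : W := wf.min _ hne' with hi0
    have hmem : ¬ (i0 ∈ s ↔ i0 ∈ t) := wf.min_mem _ hne'
    have hbelow : ∀ i : W, r i i0 → (i ∈ s ↔ i ∈ t) := by
      intro i hi
      by_contra h
      exact wf.not_lt_min _ h hi
    have hTeq : T i0 s = T i0 t := agree i0 s t hbelow
    rcases Classical.em (i0 ∈ s) with hs0 | hs0
    · have ht0 : i0 ∉ t := fun h => hmem ⟨fun _ => h, fun _ => hs0⟩
      have h1 : T i0 s < F s := (Fspec s).1 i0 hs0
      have h2 : F t < T i0 t := (Fspec t).2 i0 ht0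
      rw [← hFeq, ← hTeq] at h2
      exact absurd (h2.trans h1) (lt_irrefl _)
    · have ht0 : i0 ∈ t := by
        by_contra ht0
        exact hmem ⟨fun h => absurd h hs0, fun h => absurd h ht0⟩
      have h1 : T i0 t < F t := (Fspec t).1 i0 ht0
      have h2 : F s < T i0 s := (Fspec s).2 i0 hs0
      rw [hFeq, hTeq] at h2
      exact absurd (h2.trans h1) (lt_irrefl _)
  calc (2 : Cardinal.{u}) ^ θ = Cardinal.mk (Set W) := by rw [Cardinal.mk_set, hWcard]
    _ ≤ Cardinal.mk M := Cardinal.mk_le_of_injective Finj
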